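/- Let n ≥ 1, a, b ∈ ℝⁿ, and β ∈ [0,1]. If ⟨b⟩ ≥ β⟨a−b⟩, then ⟨a⟩^{1/2} ≤ ⟨b⟩^{1/2} + (1 − √β/2)·⟨a−b⟩^{1/2}. -/
import Mathlib


/-- Japanese bracket of a vector in `EuclideanSpace ℝ (Fin n)`. -/
noncomputable def jbVec {n : ℕ} (x : EuclideanSpace ℝ (Fin n)) : ℝ :=
  Real.sqrt (1 + ‖x‖ ^ 2)

/-- If `⟨b⟩ ≥ β⟨a−b⟩` with `β ∈ [0,1]`, then
`⟨a⟩^{1/2} ≤ ⟨b⟩^{1/2} + (1 − √β/2)⟨a−b⟩^{1/2}`. -/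
theorem stmt0 (n : ℕ) (hn : 1 ≤ n) (a b : EuclideanSpace ℝ (Fin n))
    (β : ℝ) (hβ : β ∈ Set.Icc (0 : ℝ) 1)
    (h : jbVec b ≥ β * jbVec (a - b)) :
    (jbVec a) ^ ((1 : ℝ) / 2) ≤
      (jbVec b) ^ ((1 : ℝ) / 2) +
        (1 - Real.sqrt β / 2) * (jbVec (a - b)) ^ ((1 : ℝ) / 2) := by
  obtain ⟨hβ0, hβ1⟩ := hβ
  rw [← Real.sqrt_eq_rpow, ← Real.sqrt_eq_rpow, ← Real.sqrt_eq_rpow]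
  set s : ℝ := ‖b‖ with hs
  set t : ℝ := ‖a - b‖ with ht
  have hs0 : 0 ≤ s := norm_nonneg _
  have ht0 : 0 ≤ t := norm_nonneg _
  have hna : ‖a‖ ≤ s + t := by
    calc ‖a‖ = ‖b + (a - b)‖ := by rw [add_sub_cancel]
    _ ≤ s + t := norm_add_le _ _
  have hA0 : 0 ≤ jbVec a := Real.sqrt_nonneg _
  have hB0 : 0 ≤ jbVec b := Real.sqrt_nonneg _
  have hC0 : 0 ≤ jbVec (a - b) := Real.sqrt_nonneg _
  have hA2 : (jbVec a) ^ 2 = 1 + ‖a‖ ^ 2 := Real.sq_sqrt (by positivity)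
  have hB2 : (jbVec b) ^ 2 = 1 + s ^ 2 := Real.sq_sqrt (by positivity)
  have hC2 : (jbVec (a - b)) ^ 2 = 1 + t ^ 2 := Real.sq_sqrt (by positivity)
  -- triangle inequality for the bracket
  have htri : jbVec a ≤ jbVec b + jbVec (a - b) := by
    have hBs : s ≤ jbVec b := by nlinarith [sq_nonneg (jbVec b - s)]
    have hCt : t ≤ jbVec (a - b) := by nlinarith [sq_nonneg (jbVec (a - b) - t)]
    have h1 : 1 + ‖a‖ ^ 2 ≤ (jbVec b + jbVec (a - b)) ^ 2 := by
      nlinarith [norm_nonneg a, mul_le_mul hBs hCt ht0 hB0, mul_nonneg hs0 ht0]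
    calc jbVec a ≤ Real.sqrt ((jbVec b + jbVec (a - b)) ^ 2) := Real.sqrt_le_sqrt h1
    _ = jbVec b + jbVec (a - b) := Real.sqrt_sq (by positivity)
  set u : ℝ := Real.sqrt (jbVec b) with hu
  set v : ℝ := Real.sqrt (jbVec (a - b)) with hv
  set c : ℝ := Real.sqrt β with hc
  have hu0 : 0 ≤ u := Real.sqrt_nonneg _
  have hv0 : 0 ≤ v := Real.sqrt_nonneg _
  have hc0 : 0 ≤ c := Real.sqrt_nonneg _
  have hc1 : c ≤ 1 := Real.sqrt_le_one.2 hβ1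
  have hu2 : u ^ 2 = jbVec b := Real.sq_sqrt hB0
  have hv2 : v ^ 2 = jbVec (a - b) := Real.sq_sqrt hC0
  have hcv : c * v ≤ u := by
    have : Real.sqrt (β * jbVec (a - b)) ≤ u := Real.sqrt_le_sqrt h
    rwa [Real.sqrt_mul hβ0] at this
  have hrhs : 0 ≤ u + (1 - c / 2) * v := by nlinarith
  have hkey : jbVec a ≤ (u + (1 - c / 2) * v) ^ 2 := by
    have : u ^ 2 + v ^ 2 ≤ (u + (1 - c / 2) * v) ^ 2 := by
      nlinarith [mul_nonneg hv0 (sub_nonneg.2 hcv), mul_nonneg (mul_nonneg hc0 hv0) hv0,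
        mul_nonneg (mul_nonneg (mul_nonneg hc0 hc0) hv0) hv0,
        mul_nonneg (mul_nonneg hv0 hv0) (mul_nonneg hc0 (sub_nonneg.2 hc1))]
    calc jbVec a ≤ jbVec b + jbVec (a - b) := htri
    _ = u ^ 2 + v ^ 2 := by rw [hu2, hv2]
    _ ≤ _ := this
  calc Real.sqrt (jbVec a) ≤ Real.sqrt ((u + (1 - c / 2) * v) ^ 2) := Real.sqrt_le_sqrt hkey
  _ = u + (1 - c / 2) * v := Real.sqrt_sq hrhs
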